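/- Let x_1, …, x_m ∈ ℝ^n, let (Z, C) be an initialization with C = 0, and let r ≥ 0. For the depth-d linear network and every 1 ≤ k ≤ d, writing sup for the supremum over all (W, B) with ‖(W,B)−(Z,C)‖_F ≤ r, one has the recursive layer-peeling bound E_ξ[ sup ‖ Σ_{i=1}^m ξ_i f^{(k)}_{(W,B)}(x_i) ‖ ] ≤ (‖Z_k‖_2 + r) · E_ξ[ sup ‖ Σ_{i=1}^m ξ_i f^{(k−1)}_{(W,B)}(x_i) ‖ ] + r √m, where ξ is uniform on {−1, 1}^m. -/

import Mathlib

open scoped BigOperators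

noncomputable section

/-- Dimension of the `k`-th layer of a depth-`d` network with input dimension `n`
and `H` hidden units per layer: `dim 0 = n`, `dim d = 1`, and `H` in between. -/
def dim (n H d : ℕ) : ℕ → ℕ
  | 0 => n
  | (k + 1) => if k + 1 = d then 1 else H

/-- A parameter configuration of a depth-`d` feed-forward network. -/
structure Params (n H d : ℕ) where
  W : ∀ k : Fin d, Matrix (Fin (dim n H d (k + 1))) (Fin (dim n H d k)) ℝ
  b : ∀ k : Fin d, EuclideanSpace ℝ (Fin (dim n H d (k + 1)))

/-- Squared Frobenius norm of a matrix. -/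
def frobSq {p q : ℕ} (A : Matrix (Fin p) (Fin q) ℝ) : ℝ :=
  ∑ i, ∑ j, (A i j) ^ 2

/-- Frobenius norm of a matrix. -/
def frob {p q : ℕ} (A : Matrix (Fin p) (Fin q) ℝ) : ℝ := Real.sqrt (frobSq A)

/-- Spectral norm: operator norm of the associated map between Euclidean spaces. -/
def spec {p q : ℕ} (A : Matrix (Fin p) (Fin q) ℝ) : ℝ :=
  ‖LinearMap.toContinuousLinearMap (Matrix.toEuclideanLin A)‖

/-- `ℓ2` distance between two parameter configurations. -/
def paramDist {n H d : ℕ} (P Q : Params n H d) : ℝ :=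
  Real.sqrt (∑ k : Fin d, (frobSq (P.W k - Q.W k) + ‖P.b k - Q.b k‖ ^ 2))

/-- Coordinatewise ReLU. -/
def relu {p : ℕ} (v : EuclideanSpace ℝ (Fin p)) : EuclideanSpace ℝ (Fin p) :=
  WithLp.toLp 2 (fun i => max (v i) 0)

/-- Layer outputs of the ReLU network. -/
def layer {n H d : ℕ} (P : Params n H d) (x : EuclideanSpace ℝ (Fin n)) :
    (k : ℕ) → k ≤ d → EuclideanSpace ℝ (Fin (dim n H d k))
  | 0, _ => x
  | (k + 1), hk =>
      Matrix.toEuclideanLin (P.W ⟨k, hk⟩) (relu (layer P x k (Nat.le_of_succ_le hk)))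
        + P.b ⟨k, hk⟩

/-- Layer outputs of the linear network (no activation). -/
def linLayer {n H d : ℕ} (P : Params n H d) (x : EuclideanSpace ℝ (Fin n)) :
    (k : ℕ) → k ≤ d → EuclideanSpace ℝ (Fin (dim n H d k))
  | 0, _ => x
  | (k + 1), hk =>
      Matrix.toEuclideanLin (P.W ⟨k, hk⟩) (linLayer P x k (Nat.le_of_succ_le hk))
        + P.b ⟨k, hk⟩

lemma dim_last {n H d : ℕ} (hd : 0 < d) : dim n H d d = 1 := by
  cases d with
  | zero => omega
  | succ k => simp [dim]

/-- Real-valued output of the ReLU network. -/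
def netOut {n H d : ℕ} (hd : 0 < d) (P : Params n H d) (x : EuclideanSpace ℝ (Fin n)) : ℝ :=
  layer P x d le_rfl ⟨0, by rw [dim_last hd]; omega⟩

/-- Real-valued output of the linear network. -/
def linNetOut {n H d : ℕ} (hd : 0 < d) (P : Params n H d) (x : EuclideanSpace ℝ (Fin n)) : ℝ :=
  linLayer P x d le_rfl ⟨0, by rw [dim_last hd]; omega⟩

/-- Expectation over a Rademacher vector `ξ` drawn uniformly from `{-1,1}^m`. -/
def radExp (m : ℕ) (g : (Fin m → ℝ) → ℝ) : ℝ :=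
  (∑ ε : Fin m → Bool, g (fun i => if ε i then 1 else -1)) / 2 ^ m


/-! ### Auxiliary lemmas -/

lemma frobSq_nonneg' {p q : ℕ} (A : Matrix (Fin p) (Fin q) ℝ) : 0 ≤ frobSq A := by
  apply Finset.sum_nonneg; intro i _; apply Finset.sum_nonneg; intro j _; positivity

lemma frob_nonneg' {p q : ℕ} (A : Matrix (Fin p) (Fin q) ℝ) : 0 ≤ frob A := Real.sqrt_nonneg _

lemma spec_nonneg' {p q : ℕ} (A : Matrix (Fin p) (Fin q) ℝ) : 0 ≤ spec A := norm_nonneg _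

lemma norm_toEuclideanLin_le {p q : ℕ} (A : Matrix (Fin p) (Fin q) ℝ)
    (v : EuclideanSpace ℝ (Fin q)) : ‖Matrix.toEuclideanLin A v‖ ≤ spec A * ‖v‖ := by
  have := (LinearMap.toContinuousLinearMap (Matrix.toEuclideanLin A)).le_opNorm v
  simpa [spec, LinearMap.coe_toContinuousLinearMap'] using this

lemma spec_le_frob {p q : ℕ} (A : Matrix (Fin p) (Fin q) ℝ) : spec A ≤ frob A := by
  apply ContinuousLinearMap.opNorm_le_bound _ (frob_nonneg' A)
  intro v
  rw [LinearMap.coe_toContinuousLinearMap']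
  have hv : ‖v‖ = Real.sqrt (∑ j, (v j) ^ 2) := by
    rw [EuclideanSpace.norm_eq]
    congr 1
    exact Finset.sum_congr rfl fun j _ => by rw [Real.norm_eq_abs, sq_abs]
  have hw : ‖Matrix.toEuclideanLin A v‖ = Real.sqrt (∑ i, (∑ j, A i j * v j) ^ 2) := by
    rw [EuclideanSpace.norm_eq]
    congr 1
    refine Finset.sum_congr rfl fun i _ => ?_
    rw [Real.norm_eq_abs, sq_abs]
    simp [Matrix.toEuclideanLin_apply, Matrix.mulVec, dotProduct]
  rw [hw, hv, frob, ← Real.sqrt_mul (frobSq_nonneg' A)]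
  apply Real.sqrt_le_sqrt
  rw [frobSq, Finset.sum_mul]
  apply Finset.sum_le_sum
  intro i _
  exact Finset.sum_mul_sq_le_sq_mul_sq _ _ _

lemma spec_le_spec_add_frob {p q : ℕ} (A B : Matrix (Fin p) (Fin q) ℝ) :
    spec A ≤ spec B + frob (A - B) := by
  calc spec A = ‖LinearMap.toContinuousLinearMap (Matrix.toEuclideanLin (B + (A - B)))‖ := by
        rw [add_sub_cancel]; rfl
    _ ≤ spec B + spec (A - B) := by
        rw [map_add, map_add]; exact norm_add_le _ _
    _ ≤ spec B + frob (A - B) := by linarith [spec_le_frob (A - B)]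

lemma radExp_mono {m : ℕ} {g h : (Fin m → ℝ) → ℝ} (hgh : ∀ ξ, g ξ ≤ h ξ) :
    radExp m g ≤ radExp m h := by
  unfold radExp
  gcongr with ε _
  exact hgh _

lemma radExp_add {m : ℕ} (g h : (Fin m → ℝ) → ℝ) :
    radExp m (fun ξ => g ξ + h ξ) = radExp m g + radExp m h := by
  simp [radExp, Finset.sum_add_distrib, add_div]

lemma radExp_const_mul {m : ℕ} (c : ℝ) (g : (Fin m → ℝ) → ℝ) :
    radExp m (fun ξ => c * g ξ) = c * radExp m g := by
  simp only [radExp, ← Finset.mul_sum, mul_div_assoc]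

def sgn {m : ℕ} (ε : Fin m → Bool) : Fin m → ℝ := fun i => if ε i then 1 else -1

lemma sum_sgn_mul_sgn_eq_zero {m : ℕ} (i j : Fin m) (hij : i ≠ j) :
    ∑ ε : Fin m → Bool, sgn ε i * sgn ε j = 0 := by
  have hinv : Function.Involutive (fun ε : Fin m → Bool => Function.update ε i (!ε i)) := by
    intro ε
    funext t
    by_cases ht : t = i
    · subst ht; simp
    · simp [Function.update_of_ne ht]
  set e := hinv.toPerm with he
  have key : ∀ ε : Fin m → Bool, sgn (e ε) i * sgn (e ε) j = -(sgn ε i * sgn ε j) := by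
    intro ε
    have h1 : sgn (e ε) i = -sgn ε i := by
      simp only [he, Function.Involutive.coe_toPerm, sgn, Function.update_self]
      cases h : ε i <;> simp [h]
    have h2 : sgn (e ε) j = sgn ε j := by
      simp only [he, Function.Involutive.coe_toPerm, sgn,
        Function.update_of_ne (Ne.symm hij)]
    rw [h1, h2]; ring
  have hsum := Equiv.sum_comp e (fun ε => sgn ε i * sgn ε j)
  have h2 : ∑ ε : Fin m → Bool, sgn ε i * sgn ε j
      = -∑ ε : Fin m → Bool, sgn ε i * sgn ε j := by
    conv_lhs => rw [← hsum]
    rw [← Finset.sum_neg_distrib]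
    exact Finset.sum_congr rfl fun ε _ => key ε
  linarith

lemma sum_sgn_mul_sgn {m : ℕ} (i j : Fin m) :
    ∑ ε : Fin m → Bool, sgn ε i * sgn ε j = if j = i then (2:ℝ) ^ m else 0 := by
  by_cases hij : j = i
  · subst hij
    rw [if_pos rfl]
    have h1 : ∀ ε : Fin m → Bool, sgn ε j * sgn ε j = 1 := by
      intro ε; cases h : ε j <;> simp [sgn, h]
    rw [Finset.sum_congr rfl fun ε _ => h1 ε]
    simp [Finset.card_univ]
  · rw [if_neg hij]
    exact sum_sgn_mul_sgn_eq_zero i j (fun h => hij h.symm)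

lemma sum_sq_sum_sgn {m : ℕ} :
    ∑ ε : Fin m → Bool, (∑ i, sgn ε i) ^ 2 = m * 2 ^ m := by
  calc ∑ ε : Fin m → Bool, (∑ i, sgn ε i) ^ 2
      = ∑ ε : Fin m → Bool, ∑ i, ∑ j, sgn ε i * sgn ε j := by
        refine Finset.sum_congr rfl fun ε _ => ?_
        rw [sq, Finset.sum_mul_sum]
    _ = ∑ i, ∑ ε : Fin m → Bool, ∑ j, sgn ε i * sgn ε j := Finset.sum_comm
    _ = ∑ i : Fin m, ∑ j, ∑ ε : Fin m → Bool, sgn ε i * sgn ε j := by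
        exact Finset.sum_congr rfl fun i _ => Finset.sum_comm
    _ = ∑ _i : Fin m, (2:ℝ) ^ m := by
        refine Finset.sum_congr rfl fun i _ => ?_
        rw [Finset.sum_congr rfl fun j _ => sum_sgn_mul_sgn i j]
        simp
    _ = m * 2 ^ m := by
        simp [Finset.card_univ, nsmul_eq_mul]

lemma radExp_abs_sum_le {m : ℕ} :
    radExp m (fun ξ => |∑ i, ξ i|) ≤ Real.sqrt m := by
  have habs : (∑ ε : Fin m → Bool, |∑ i, sgn ε i|) ≤ Real.sqrt m * 2 ^ m := by
    have cs := Finset.sum_mul_sq_le_sq_mul_sq (Finset.univ : Finset (Fin m → Bool))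
      (fun ε => |∑ i, sgn ε i|) (fun _ => 1)
    simp only [mul_one, one_pow, sq_abs, Finset.sum_const, Finset.card_univ,
      nsmul_eq_mul, Fintype.card_fun, Fintype.card_bool, Fintype.card_fin] at cs
    rw [sum_sq_sum_sgn] at cs
    have hnn : 0 ≤ ∑ ε : Fin m → Bool, |∑ i, sgn ε i| :=
      Finset.sum_nonneg fun ε _ => abs_nonneg _
    have step : (∑ ε : Fin m → Bool, |∑ i, sgn ε i|)
        ≤ Real.sqrt ((m * 2 ^ m) * 2 ^ m) := by
      rw [← Real.sqrt_sq hnn]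
      apply Real.sqrt_le_sqrt
      convert cs using 2
      push_cast
      · rfl
      · norm_num
    calc (∑ ε : Fin m → Bool, |∑ i, sgn ε i|)
        ≤ Real.sqrt ((m * 2 ^ m) * 2 ^ m) := step
      _ = Real.sqrt m * 2 ^ m := by
          rw [mul_assoc, Real.sqrt_mul (by positivity)]
          congr 1
          rw [← sq]
          exact Real.sqrt_sq (by positivity)
  unfold radExp
  rw [div_le_iff₀ (by positivity)]
  exact habs

lemma paramDist_self' {n H d : ℕ} (Z : Params n H d) : paramDist Z Z = 0 := by
  simp [paramDist, frobSq]

lemma frob_sub_le_of_paramDist {n H d : ℕ} {P Z : Params n H d} {r : ℝ}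
    (h : paramDist P Z ≤ r) (k : Fin d) : frob (P.W k - Z.W k) ≤ r := by
  have hterm : frobSq (P.W k - Z.W k)
      ≤ ∑ j : Fin d, (frobSq (P.W j - Z.W j) + ‖P.b j - Z.b j‖ ^ 2) := by
    calc frobSq (P.W k - Z.W k)
        ≤ frobSq (P.W k - Z.W k) + ‖P.b k - Z.b k‖ ^ 2 :=
          le_add_of_nonneg_right (by positivity)
      _ ≤ _ := Finset.single_le_sum
          (f := fun j : Fin d => frobSq (P.W j - Z.W j) + ‖P.b j - Z.b j‖ ^ 2)
          (fun j _ => add_nonneg (frobSq_nonneg' _) (by positivity)) (Finset.mem_univ k)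
  calc frob (P.W k - Z.W k)
      ≤ Real.sqrt (∑ j : Fin d, (frobSq (P.W j - Z.W j) + ‖P.b j - Z.b j‖ ^ 2)) :=
        Real.sqrt_le_sqrt hterm
    _ ≤ r := h

lemma norm_b_le_of_paramDist {n H d : ℕ} {P Z : Params n H d} {r : ℝ}
    (h : paramDist P Z ≤ r) (hC : ∀ k, Z.b k = 0) (k : Fin d) : ‖P.b k‖ ≤ r := by
  have hterm : ‖P.b k - Z.b k‖ ^ 2
      ≤ ∑ j : Fin d, (frobSq (P.W j - Z.W j) + ‖P.b j - Z.b j‖ ^ 2) := by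
    calc ‖P.b k - Z.b k‖ ^ 2
        ≤ frobSq (P.W k - Z.W k) + ‖P.b k - Z.b k‖ ^ 2 :=
          le_add_of_nonneg_left (frobSq_nonneg' _)
      _ ≤ _ := Finset.single_le_sum
          (f := fun j : Fin d => frobSq (P.W j - Z.W j) + ‖P.b j - Z.b j‖ ^ 2)
          (fun j _ => add_nonneg (frobSq_nonneg' _) (by positivity)) (Finset.mem_univ k)
  have hb : ‖P.b k - Z.b k‖ ≤ r := by
    calc ‖P.b k - Z.b k‖ = Real.sqrt (‖P.b k - Z.b k‖ ^ 2) :=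
          (Real.sqrt_sq (norm_nonneg _)).symm
      _ ≤ Real.sqrt (∑ j : Fin d, (frobSq (P.W j - Z.W j) + ‖P.b j - Z.b j‖ ^ 2)) :=
          Real.sqrt_le_sqrt hterm
      _ ≤ r := h
  rwa [hC k, sub_zero] at hb

lemma spec_W_le {n H d : ℕ} {P Z : Params n H d} {r : ℝ}
    (h : paramDist P Z ≤ r) (k : Fin d) : spec (P.W k) ≤ spec (Z.W k) + r := by
  have h1 := spec_le_spec_add_frob (P.W k) (Z.W k)
  have h2 := frob_sub_le_of_paramDist h k
  linarith

lemma linLayer_bound {n H d m : ℕ} (x : Fin m → EuclideanSpace ℝ (Fin n))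
    (Z : Params n H d) (hC : ∀ k, Z.b k = 0) (r : ℝ) (hr : 0 ≤ r) :
    ∀ (k : ℕ) (hk : k ≤ d), ∃ M : ℝ, 0 ≤ M ∧
      ∀ P : Params n H d, paramDist P Z ≤ r → ∀ i, ‖linLayer P (x i) k hk‖ ≤ M := by
  intro k
  induction k with
  | zero =>
      intro hk
      refine ⟨∑ i, ‖x i‖, Finset.sum_nonneg fun i _ => norm_nonneg _, ?_⟩
      intro P _ i
      exact Finset.single_le_sum (fun j _ => norm_nonneg _) (Finset.mem_univ i)
  | succ k ih =>
      intro hk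
      obtain ⟨M, hM0, hM⟩ := ih (Nat.le_of_succ_le hk)
      refine ⟨(spec (Z.W ⟨k, hk⟩) + r) * M + r,
        add_nonneg (mul_nonneg (add_nonneg (spec_nonneg' _) hr) hM0) hr, ?_⟩
      intro P hP i
      have hspec : spec (P.W ⟨k, hk⟩) ≤ spec (Z.W ⟨k, hk⟩) + r := spec_W_le hP _
      have hb : ‖P.b ⟨k, hk⟩‖ ≤ r := norm_b_le_of_paramDist hP hC _
      have hu : ‖linLayer P (x i) k (Nat.le_of_succ_le hk)‖ ≤ M := hM P hP i
      show ‖Matrix.toEuclideanLin (P.W ⟨k, hk⟩)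
          (linLayer P (x i) k (Nat.le_of_succ_le hk)) + P.b ⟨k, hk⟩‖ ≤ _
      calc ‖Matrix.toEuclideanLin (P.W ⟨k, hk⟩)
              (linLayer P (x i) k (Nat.le_of_succ_le hk)) + P.b ⟨k, hk⟩‖
          ≤ ‖Matrix.toEuclideanLin (P.W ⟨k, hk⟩)
              (linLayer P (x i) k (Nat.le_of_succ_le hk))‖ + ‖P.b ⟨k, hk⟩‖ :=
            norm_add_le _ _
        _ ≤ spec (P.W ⟨k, hk⟩) * ‖linLayer P (x i) k (Nat.le_of_succ_le hk)‖ + r := by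
            have := norm_toEuclideanLin_le (P.W ⟨k, hk⟩)
              (linLayer P (x i) k (Nat.le_of_succ_le hk))
            linarith
        _ ≤ (spec (Z.W ⟨k, hk⟩) + r) * M + r := by
            have := mul_le_mul hspec hu (norm_nonneg _)
              (add_nonneg (spec_nonneg' _) hr)
            linarith

/-- recursive layer-peeling bound for the Rademacher sums of a
linear network over the Frobenius ball of radius `r` around the initialization. -/
theorem stmt1 {n H d m : ℕ}
    (x : Fin m → EuclideanSpace ℝ (Fin n))
    (Z : Params n H d) (hC : ∀ k, Z.b k = 0)
    (r : ℝ) (hr : 0 ≤ r)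
    (k : ℕ) (hk : k + 1 ≤ d) :
    radExp m (fun ξ =>
        ⨆ P : {P : Params n H d // paramDist P Z ≤ r},
          ‖∑ i, ξ i • linLayer P.1 (x i) (k + 1) hk‖)
      ≤ (spec (Z.W ⟨k, hk⟩) + r) *
          radExp m (fun ξ =>
            ⨆ P : {P : Params n H d // paramDist P Z ≤ r},
              ‖∑ i, ξ i • linLayer P.1 (x i) k (Nat.le_of_succ_le hk)‖)
        + r * Real.sqrt m := by
  haveI hne : Nonempty {P : Params n H d // paramDist P Z ≤ r} :=
    ⟨⟨Z, by rw [paramDist_self']; exact hr⟩⟩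
  have hc0 : 0 ≤ spec (Z.W ⟨k, hk⟩) + r := add_nonneg (spec_nonneg' _) hr
  obtain ⟨M, hM0, hM⟩ := linLayer_bound x Z hC r hr k (Nat.le_of_succ_le hk)
  have hbdd : ∀ ξ : Fin m → ℝ,
      BddAbove (Set.range fun P : {P : Params n H d // paramDist P Z ≤ r} =>
        ‖∑ i, ξ i • linLayer P.1 (x i) k (Nat.le_of_succ_le hk)‖) := by
    intro ξ
    refine ⟨(∑ i, |ξ i|) * M, ?_⟩
    rintro t ⟨P, rfl⟩
    calc ‖∑ i, ξ i • linLayer P.1 (x i) k (Nat.le_of_succ_le hk)‖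
        ≤ ∑ i, ‖ξ i • linLayer P.1 (x i) k (Nat.le_of_succ_le hk)‖ := norm_sum_le _ _
      _ ≤ ∑ i, |ξ i| * M := by
          refine Finset.sum_le_sum fun i _ => ?_
          rw [norm_smul, Real.norm_eq_abs]
          exact mul_le_mul_of_nonneg_left (hM P.1 P.2 i) (abs_nonneg _)
      _ = (∑ i, |ξ i|) * M := by rw [Finset.sum_mul]
  have pointwise : ∀ ξ : Fin m → ℝ,
      (⨆ P : {P : Params n H d // paramDist P Z ≤ r},
          ‖∑ i, ξ i • linLayer P.1 (x i) (k + 1) hk‖)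
        ≤ (spec (Z.W ⟨k, hk⟩) + r) *
            (⨆ P : {P : Params n H d // paramDist P Z ≤ r},
              ‖∑ i, ξ i • linLayer P.1 (x i) k (Nat.le_of_succ_le hk)‖)
          + r * |∑ i, ξ i| := by
    intro ξ
    apply ciSup_le
    intro P
    have hdecomp : ∑ i, ξ i • linLayer P.1 (x i) (k + 1) hk
        = Matrix.toEuclideanLin (P.1.W ⟨k, hk⟩)
            (∑ i, ξ i • linLayer P.1 (x i) k (Nat.le_of_succ_le hk))
          + (∑ i, ξ i) • P.1.b ⟨k, hk⟩ := by
      simp only [linLayer, map_sum, map_smul, Finset.sum_smul, smul_add,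
        Finset.sum_add_distrib]
    rw [hdecomp]
    have h1 := norm_add_le
      (Matrix.toEuclideanLin (P.1.W ⟨k, hk⟩)
        (∑ i, ξ i • linLayer P.1 (x i) k (Nat.le_of_succ_le hk)))
      ((∑ i, ξ i) • P.1.b ⟨k, hk⟩)
    have h2 := norm_toEuclideanLin_le (P.1.W ⟨k, hk⟩)
      (∑ i, ξ i • linLayer P.1 (x i) k (Nat.le_of_succ_le hk))
    have h3 : ‖(∑ i, ξ i) • P.1.b ⟨k, hk⟩‖ ≤ |∑ i, ξ i| * r := by
      rw [norm_smul, Real.norm_eq_abs]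
      exact mul_le_mul_of_nonneg_left (norm_b_le_of_paramDist P.2 hC _) (abs_nonneg _)
    have h4 : spec (P.1.W ⟨k, hk⟩) *
        ‖∑ i, ξ i • linLayer P.1 (x i) k (Nat.le_of_succ_le hk)‖
        ≤ (spec (Z.W ⟨k, hk⟩) + r) *
            (⨆ Q : {P : Params n H d // paramDist P Z ≤ r},
              ‖∑ i, ξ i • linLayer Q.1 (x i) k (Nat.le_of_succ_le hk)‖) :=
      mul_le_mul (spec_W_le P.2 _) (le_ciSup (hbdd ξ) P) (norm_nonneg _) hc0
    have h5 : |∑ i, ξ i| * r = r * |∑ i, ξ i| := mul_comm _ _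
    linarith
  calc radExp m (fun ξ =>
        ⨆ P : {P : Params n H d // paramDist P Z ≤ r},
          ‖∑ i, ξ i • linLayer P.1 (x i) (k + 1) hk‖)
      ≤ radExp m (fun ξ =>
          (spec (Z.W ⟨k, hk⟩) + r) *
            (⨆ P : {P : Params n H d // paramDist P Z ≤ r},
              ‖∑ i, ξ i • linLayer P.1 (x i) k (Nat.le_of_succ_le hk)‖)
          + r * |∑ i, ξ i|) := radExp_mono pointwise
    _ = (spec (Z.W ⟨k, hk⟩) + r) *
          radExp m (fun ξ =>
            ⨆ P : {P : Params n H d // paramDist P Z ≤ r},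
              ‖∑ i, ξ i • linLayer P.1 (x i) k (Nat.le_of_succ_le hk)‖)
        + r * radExp m (fun ξ => |∑ i, ξ i|) := by
        rw [radExp_add
          (fun ξ => (spec (Z.W ⟨k, hk⟩) + r) *
            (⨆ P : {P : Params n H d // paramDist P Z ≤ r},
              ‖∑ i, ξ i • linLayer P.1 (x i) k (Nat.le_of_succ_le hk)‖))
          (fun ξ => r * |∑ i, ξ i|),
          radExp_const_mul, radExp_const_mul]
    _ ≤ (spec (Z.W ⟨k, hk⟩) + r) *
          radExp m (fun ξ =>
            ⨆ P : {P : Params n H d // paramDist P Z ≤ r},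
              ‖∑ i, ξ i • linLayer P.1 (x i) k (Nat.le_of_succ_le hk)‖)
        + r * Real.sqrt m := by
        have := radExp_abs_sum_le (m := m)
        have h6 := mul_le_mul_of_nonneg_left this hr
        linarith
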